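/- Let p_1 and p_2 be distinct primes, let a be a nonnegative integer, and let b be an integer with 0 ≤ b < p_1 p_2. Then W(a p_1 p_2 + b, (p_1, p_2)) = a + W(b, (p_1, p_2)). -/
import Mathlib


/-- The restricted partition function `W s d`: the number of tuples
`(x_1, …, x_m)` of nonnegative integers with `x_1 d_1 + ⋯ + x_m d_m = s`. -/
noncomputable def W (s : ℕ) (d : List ℕ) : ℕ :=
  Set.ncard {x : Fin d.length → ℕ | ∑ i, x i * d.get i = s}

namespace RPaux

def A (p₁ p₂ s : ℕ) : Set (ℕ × ℕ) := {xy | xy.1 * p₁ + xy.2 * p₂ = s}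

lemma A_finite (p₁ p₂ s : ℕ) (h1 : 0 < p₁) (h2 : 0 < p₂) : (A p₁ p₂ s).Finite := by
  apply Set.Finite.subset (Set.finite_Icc ((0:ℕ),(0:ℕ)) (s, s))
  rintro ⟨x, y⟩ hxy
  simp only [A, Set.mem_setOf_eq] at hxy
  constructor <;> constructor <;> simp <;> nlinarith

lemma W_eq (p₁ p₂ s : ℕ) : W s [p₁, p₂] = (A p₁ p₂ s).ncard := by
  have e := piFinTwoEquiv (fun _ : Fin 2 => ℕ)
  have himg : (piFinTwoEquiv (fun _ : Fin 2 => ℕ)) ''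
      {x : Fin ([p₁, p₂].length) → ℕ | ∑ i, x i * [p₁, p₂].get i = s} = A p₁ p₂ s := by
    ext ⟨x, y⟩
    simp only [A, Set.mem_image, Set.mem_setOf_eq, piFinTwoEquiv_apply]
    constructor
    · rintro ⟨f, hf, h⟩
      simp only [Prod.mk.injEq] at h
      obtain ⟨h0, h1⟩ := h
      subst h0; subst h1
      simpa [Fin.sum_univ_two] using hf
    · intro h
      exact ⟨![x, y], by simpa [Fin.sum_univ_two] using h, rfl⟩
  rw [W, ← himg, Set.ncard_image_of_injective _ (Equiv.injective _)]

lemma key (p₁ p₂ : ℕ) (hp₁ : p₁.Prime) (hp₂ : p₂.Prime) (hne : p₁ ≠ p₂) (s : ℕ) :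
    (A p₁ p₂ (s + p₁ * p₂)).ncard = (A p₁ p₂ s).ncard + 1 := by
  haveI : Fact p₂.Prime := ⟨hp₂⟩
  set n' := s + p₁ * p₂ with hn'
  have hp1pos := hp₁.pos
  have hp2pos := hp₂.pos
  have hp1ne : (p₁ : ZMod p₂) ≠ 0 := by
    rw [Ne, ZMod.natCast_eq_zero_iff]
    intro hdvd
    exact hne ((Nat.prime_dvd_prime_iff_eq hp₂ hp₁).mp hdvd).symm
  set c : ℕ := ((s : ZMod p₂) / (p₁ : ZMod p₂)).val with hc
  have hclt : c < p₂ := ZMod.val_lt _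
  have hccast : ((c : ℕ) : ZMod p₂) = (s : ZMod p₂) / (p₁ : ZMod p₂) := by
    rw [hc, ZMod.natCast_val, ZMod.cast_id]
  have hcmul : ((c * p₁ : ℕ) : ZMod p₂) = (s : ZMod p₂) := by
    push_cast
    rw [hccast, div_mul_cancel₀ _ hp1ne]
  have hcle : c * p₁ ≤ n' := by
    rw [hn']
    nlinarith [Nat.mul_le_mul_right p₁ hclt.le]
  have hdvd : p₂ ∣ (n' - c * p₁) := by
    rw [← ZMod.natCast_eq_zero_iff, Nat.cast_sub hcle, hcmul, hn']
    push_cast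
    ring_nf
    simp [ZMod.natCast_self]
  set y₀ : ℕ := (n' - c * p₁) / p₂ with hy₀
  have hsol : c * p₁ + y₀ * p₂ = n' := by
    rw [hy₀, Nat.div_mul_cancel hdvd]
    omega
  -- uniqueness of small first coordinate
  have huniq : ∀ x y : ℕ, x * p₁ + y * p₂ = n' → x < p₂ → x = c ∧ y = y₀ := by
    intro x y hxy hxlt
    have hx : x = c := by
      have hcast : ((x * p₁ + y * p₂ : ℕ) : ZMod p₂) = ((n' : ℕ) : ZMod p₂) := by
        rw [hxy]
      have h1 : ((x : ℕ) : ZMod p₂) * (p₁ : ZMod p₂) = (s : ZMod p₂) := by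
        push_cast [hn'] at hcast
        simpa [ZMod.natCast_self] using hcast
      have h2 : ((x : ℕ) : ZMod p₂) = ((c : ℕ) : ZMod p₂) := by
        rw [hccast, eq_div_iff hp1ne]; exact h1
      have := (ZMod.natCast_eq_natCast_iff x c p₂).mp h2
      have := Nat.ModEq.eq_of_lt_of_lt this hxlt hclt
      exact this
    subst hx
    refine ⟨rfl, ?_⟩
    have : y * p₂ = y₀ * p₂ := by omega
    exact Nat.eq_of_mul_eq_mul_right hp2pos this
  -- the decomposition
  have hdecomp : A p₁ p₂ n' = insert (c, y₀) ((fun xy : ℕ × ℕ => (xy.1 + p₂, xy.2)) '' A p₁ p₂ s) := by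
    ext ⟨x, y⟩
    simp only [A, Set.mem_setOf_eq, Set.mem_insert_iff, Set.mem_image, Prod.mk.injEq]
    constructor
    · intro hxy
      by_cases hxlt : x < p₂
      · left
        obtain ⟨h1, h2⟩ := huniq x y hxy hxlt
        exact ⟨h1, h2⟩
      · right
        refine ⟨(x - p₂, y), ?_, by omega, rfl⟩
        simp only [Set.mem_setOf_eq]
        push_neg at hxlt
        have hx : (x - p₂) * p₁ + p₂ * p₁ = x * p₁ := by
          rw [← Nat.add_mul, Nat.sub_add_cancel hxlt]
        rw [hn'] at hxy
        have hcomm : p₂ * p₁ = p₁ * p₂ := Nat.mul_comm _ _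
        linarith
    · rintro (⟨h1, h2⟩ | ⟨⟨u, v⟩, huv, h1, h2⟩)
      · subst h1; subst h2; exact hsol
      · simp only [Set.mem_setOf_eq] at huv
        subst h1; subst h2
        simp only
        rw [hn', Nat.add_mul]
        have hcomm : p₂ * p₁ = p₁ * p₂ := Nat.mul_comm _ _
        linarith
  have hinj : Function.Injective (fun xy : ℕ × ℕ => (xy.1 + p₂, xy.2)) := by
    rintro ⟨a, b⟩ ⟨a', b'⟩ h
    simp only [Prod.mk.injEq] at h
    exact Prod.ext (by omega) h.2
  have hnotmem : (c, y₀) ∉ (fun xy : ℕ × ℕ => (xy.1 + p₂, xy.2)) '' A p₁ p₂ s := by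
    rintro ⟨⟨u, v⟩, _, h⟩
    simp only [Prod.mk.injEq] at h
    omega
  have hfin : ((fun xy : ℕ × ℕ => (xy.1 + p₂, xy.2)) '' A p₁ p₂ s).Finite :=
    (A_finite p₁ p₂ s hp1pos hp2pos).image _
  rw [hdecomp, Set.ncard_insert_of_notMem hnotmem hfin,
    Set.ncard_image_of_injective _ hinj]

end RPaux

theorem restrictedPartition_two_primes_reduction
    (p₁ p₂ : ℕ) (hp₁ : p₁.Prime) (hp₂ : p₂.Prime) (hne : p₁ ≠ p₂)
    (a b : ℕ) (hb : b < p₁ * p₂) :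
    W (a * p₁ * p₂ + b) [p₁, p₂] = a + W b [p₁, p₂] := by
  induction a with
  | zero => simp
  | succ n ih =>
    have h1 : (n + 1) * p₁ * p₂ + b = (n * p₁ * p₂ + b) + p₁ * p₂ := by ring
    rw [h1, RPaux.W_eq, RPaux.key p₁ p₂ hp₁ hp₂ hne, ← RPaux.W_eq, ih]
    ring
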